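/- For 0 < |q| < 1, the ₁φ₁ series with lower parameter 0 and argument −q evaluates as ₁φ₁(a; 0; q, −q) = (aq; q²)_∞ / (q; q²)_∞. -/

import Mathlib

open scoped BigOperators

/-- q-shifted factorial (a;q)_j -/
noncomputable def qPoch (a q : ℂ) (j : ℕ) : ℂ :=
  ∏ i ∈ Finset.range j, (1 - a * q ^ i)

/-- infinite q-shifted factorial (a;q)_∞ -/
noncomputable def qPochInf (a q : ℂ) : ℂ :=
  ∏' j : ℕ, (1 - a * q ^ j)

/-- basic hypergeometric series ₁φ₁(a; c; q, x) -/
noncomputable def phi11 (a c q x : ℂ) : ℂ :=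
  ∑' j : ℕ, qPoch a q j / (qPoch q q j * qPoch c q j) *
    (-1) ^ j * q ^ (j * (j - 1) / 2) * x ^ j

/-- basic hypergeometric series ₀φ₁(–; c; q, x) -/
noncomputable def phi01 (c q x : ℂ) : ℂ :=
  ∑' j : ℕ, q ^ (j * (j - 1)) * x ^ j / (qPoch q q j * qPoch c q j)

/-- basic hypergeometric series ₂φ₁(a, b; c; q, x) -/
noncomputable def phi21 (a b c q x : ℂ) : ℂ :=
  ∑' j : ℕ, qPoch a q j * qPoch b q j / (qPoch q q j * qPoch c q j) * x ^ j

open Filter Finset Complex Topology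

namespace Aux

lemma tri_succ (n : ℕ) : (n+1)*n/2 = n*(n-1)/2 + n := by
  have h3 : (n+1).choose 2 = n.choose 1 + n.choose 2 := Nat.choose_succ_succ n 1
  rw [Nat.choose_one_right, Nat.choose_two_right, Nat.choose_two_right] at h3
  simp only [Nat.add_sub_cancel] at h3
  omega

lemma qPoch_zero (a q : ℂ) : qPoch a q 0 = 1 := by simp [qPoch]

lemma qPoch_succ (a q : ℂ) (n : ℕ) : qPoch a q (n+1) = qPoch a q n * (1 - a * q ^ n) :=
  Finset.prod_range_succ _ _

lemma qPoch_zero_left (q : ℂ) (n : ℕ) : qPoch 0 q n = 1 := by simp [qPoch]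

lemma qPoch_shift (w q : ℂ) (n : ℕ) : qPoch w q (n+1) = (1 - w) * qPoch (w*q) q n := by
  rw [qPoch, Finset.prod_range_succ']
  simp only [pow_zero, mul_one]
  rw [mul_comm]
  congr 1
  · unfold qPoch
    apply Finset.prod_congr rfl
    intro i _
    ring

lemma ne_zero_of_norm_lt {z : ℂ} (h : ‖z‖ < 1) : 1 - z ≠ 0 := by
  intro h0
  have hz : z = 1 := by linear_combination -h0
  rw [hz] at h; simp at h

lemma norm_qPoch_le (a q : ℂ) (hq : ‖q‖ ≤ 1) (n : ℕ) : ‖qPoch a q n‖ ≤ (1+‖a‖)^n := by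
  unfold qPoch
  calc ‖∏ i ∈ Finset.range n, (1 - a * q ^ i)‖ ≤ ∏ i ∈ Finset.range n, ‖1 - a * q ^ i‖ :=
        norm_prod_le _ _
    _ ≤ ∏ _i ∈ Finset.range n, (1+‖a‖) := by
        apply Finset.prod_le_prod (fun i _ => norm_nonneg _)
        intro i _
        calc ‖1 - a * q ^ i‖ ≤ ‖(1:ℂ)‖ + ‖a * q ^ i‖ := norm_sub_le _ _
          _ ≤ 1 + ‖a‖ := by
            rw [norm_one, norm_mul, norm_pow]
            have h1 : ‖a‖ * ‖q‖ ^ i ≤ ‖a‖ * 1 := by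
              apply mul_le_mul_of_nonneg_left _ (norm_nonneg a)
              exact pow_le_one₀ (norm_nonneg q) hq
            simpa using h1
    _ = (1+‖a‖)^n := by rw [Finset.prod_const, Finset.card_range]

lemma D_pos {q : ℂ} (hq : ‖q‖ < 1) (n : ℕ) : 0 < ∏ i ∈ Finset.range n, (1 - ‖q‖^(i+1)) := by
  apply Finset.prod_pos
  intro i _
  have : ‖q‖^(i+1) < 1 := pow_lt_one₀ (norm_nonneg q) hq (Nat.succ_ne_zero i)
  linarith

lemma D_le_norm_qPoch {q : ℂ} (hq : ‖q‖ < 1) (n : ℕ) :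
    ∏ i ∈ Finset.range n, (1 - ‖q‖^(i+1)) ≤ ‖qPoch q q n‖ := by
  unfold qPoch
  rw [norm_prod]
  apply Finset.prod_le_prod
  · intro i _
    have : ‖q‖^(i+1) < 1 := pow_lt_one₀ (norm_nonneg q) hq (Nat.succ_ne_zero i)
    linarith
  · intro i _
    have h1 : ‖q * q ^ i‖ = ‖q‖^(i+1) := by
      rw [norm_mul, norm_pow]; ring
    calc 1 - ‖q‖^(i+1) = ‖(1:ℂ)‖ - ‖q * q^i‖ := by rw [norm_one, h1]
      _ ≤ ‖1 - q * q^i‖ := norm_sub_norm_le _ _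

lemma qq_ne_zero {q : ℂ} (hq : ‖q‖ < 1) (n : ℕ) : qPoch q q n ≠ 0 := by
  have := lt_of_lt_of_le (D_pos hq n) (D_le_norm_qPoch hq n)
  exact norm_pos_iff.mp this

lemma summable_master {r c : ℝ} (hr0 : 0 ≤ r) (hr1 : r < 1) (hc : 0 ≤ c) (f : ℕ → ℕ)
    (hf : ∀ n, f n + n ≤ f (n + 1)) :
    Summable (fun n => c ^ n * r ^ f n / ∏ i ∈ Finset.range n, (1 - r ^ (i+1))) := by
  apply summable_of_ratio_norm_eventually_le (r := 1/2) (by norm_num)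
  have h2 : Tendsto (fun n : ℕ => c * r ^ n) atTop (𝓝 0) := by
    simpa using (tendsto_pow_atTop_nhds_zero_of_lt_one hr0 hr1).const_mul c
  have h3 : ∀ᶠ n : ℕ in atTop, c * r ^ n < (1 - r)/2 :=
    h2.eventually_lt_const (by linarith)
  filter_upwards [h3] with n hn
  have hD : 0 < ∏ i ∈ Finset.range n, (1 - r ^ (i+1)) := by
    apply Finset.prod_pos; intro i _
    have : r^(i+1) < 1 := pow_lt_one₀ hr0 hr1 (Nat.succ_ne_zero i)
    linarith
  have hrn : r^(n+1) ≤ r := by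
    calc r^(n+1) ≤ r^1 := pow_le_pow_of_le_one hr0 hr1.le (by omega)
      _ = r := pow_one r
  have hrn1 : 0 < 1 - r^(n+1) := by
    have : r^(n+1) < 1 := pow_lt_one₀ hr0 hr1 (Nat.succ_ne_zero n)
    linarith
  have hDs : ∏ i ∈ Finset.range (n+1), (1 - r ^ (i+1))
      = (∏ i ∈ Finset.range n, (1 - r ^ (i+1))) * (1 - r^(n+1)) := Finset.prod_range_succ _ _
  have hpow : r ^ f (n+1) ≤ r ^ f n * r ^ n := by
    rw [← pow_add]
    exact pow_le_pow_of_le_one hr0 hr1.le (hf n)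
  rw [hDs]
  simp only [Real.norm_eq_abs]
  rw [_root_.abs_of_nonneg (show (0:ℝ) ≤ c ^ (n + 1) * r ^ f (n + 1) / ((∏ i ∈ Finset.range n, (1 - r ^ (i + 1))) * (1 - r ^ (n + 1))) by positivity),
    _root_.abs_of_nonneg (show (0:ℝ) ≤ c ^ n * r ^ f n / ∏ i ∈ Finset.range n, (1 - r ^ (i + 1)) by positivity)]
  set D := ∏ i ∈ Finset.range n, (1 - r ^ (i+1)) with hDdef
  set s := r ^ (n+1) with hsdef
  set B := c ^ n * r ^ f n with hBdef
  have hBnn : 0 ≤ B := by positivity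
  have hkey : 1 / 2 * (B / D) * (D * (1 - s)) = B * (1-s) / 2 := by
    field_simp
  rw [div_le_iff₀ (by positivity), hkey]
  have e1 : c ^ (n+1) * r ^ f (n+1) ≤ (c * r^n) * B := by
    calc c ^ (n+1) * r ^ f (n+1) ≤ c^(n+1) * (r ^ f n * r ^ n) := by
          apply mul_le_mul_of_nonneg_left hpow (by positivity)
      _ = (c * r^n) * B := by rw [hBdef]; ring
  nlinarith [mul_le_mul_of_nonneg_right hn.le hBnn, mul_nonneg (mul_nonneg hc (pow_nonneg hr0 n)) hBnn]

lemma norm_term_le {q : ℂ} (hq : ‖q‖ < 1) (x : ℂ) (m n : ℕ) :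
    ‖qPoch x q n * q ^ m / qPoch q q n‖
      ≤ (1+‖x‖)^n * ‖q‖^m / ∏ i ∈ Finset.range n, (1 - ‖q‖^(i+1)) := by
  rw [norm_div, norm_mul, norm_pow]
  apply div_le_div₀ (by positivity)
    (mul_le_mul_of_nonneg_right (norm_qPoch_le x q hq.le n) (by positivity))
    (D_pos hq n) (D_le_norm_qPoch hq n)

lemma summable_S1 {q : ℂ} (hq : ‖q‖ < 1) (x : ℂ) :
    Summable (fun n => qPoch x q n * q ^ ((n+1)*n/2) / qPoch q q n) := by
  apply Summable.of_norm_bounded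
    (summable_master (norm_nonneg q) hq (c := 1+‖x‖) (by positivity) (fun n => (n+1)*n/2)
      (fun n => by
        show (n+1)*n/2 + n ≤ (n+2)*(n+1)/2
        have := tri_succ (n+1)
        simp only [Nat.add_sub_cancel] at this
        have h4 : n+1+1 = n+2 := by omega
        rw [h4] at this
        omega))
  intro n
  exact norm_term_le hq x _ n

lemma summable_S2 {q : ℂ} (hq : ‖q‖ < 1) (x : ℂ) :
    Summable (fun n => q ^ n * (qPoch x q n * q ^ ((n+1)*n/2)) / qPoch q q n) := by
  apply Summable.of_norm_bounded
    (summable_master (norm_nonneg q) hq (c := ‖q‖ * (1+‖x‖)) (by positivity)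
      (fun n => (n+1)*n/2) (fun n => by
        show (n+1)*n/2 + n ≤ (n+2)*(n+1)/2
        have := tri_succ (n+1)
        simp only [Nat.add_sub_cancel] at this
        have h4 : n+1+1 = n+2 := by omega
        rw [h4] at this
        omega))
  intro n
  have h1 : ‖q ^ n * (qPoch x q n * q ^ ((n+1)*n/2)) / qPoch q q n‖
      = ‖q‖^n * ‖qPoch x q n * q ^ ((n+1)*n/2) / qPoch q q n‖ := by
    rw [mul_div_assoc, norm_mul, norm_pow]
  rw [h1]
  have h2 := norm_term_le hq x ((n+1)*n/2) n
  calc ‖q‖^n * ‖qPoch x q n * q ^ ((n+1)*n/2) / qPoch q q n‖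
      ≤ ‖q‖^n * ((1+‖x‖)^n * ‖q‖^((n+1)*n/2) / ∏ i ∈ Finset.range n, (1 - ‖q‖^(i+1))) :=
        mul_le_mul_of_nonneg_left h2 (by positivity)
    _ = (‖q‖ * (1+‖x‖))^n * ‖q‖^((n+1)*n/2) / ∏ i ∈ Finset.range n, (1 - ‖q‖^(i+1)) := by
        rw [mul_pow]; ring

lemma summable_S3 {q : ℂ} (hq : ‖q‖ < 1) (x : ℂ) :
    Summable (fun n => x ^ n * q ^ (n*(n-1)/2) / qPoch q q n) := by
  apply Summable.of_norm_bounded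
    (summable_master (norm_nonneg q) hq (norm_nonneg x) (fun n => n*(n-1)/2)
      (fun n => by
        show n*(n-1)/2 + n ≤ (n+1)*n/2
        have := tri_succ n
        omega))
  intro n
  rw [norm_div, norm_mul, norm_pow, norm_pow]
  apply div_le_div₀ (by positivity) le_rfl (D_pos hq n) (D_le_norm_qPoch hq n)

lemma summable_log {q : ℂ} (hq : ‖q‖ < 1) (c z : ℂ) :
    Summable (fun j => Complex.log (1 - c * (q ^ j * z))) := by
  have h2 : Tendsto (fun j : ℕ => ‖c * z‖ * ‖q‖ ^ j) atTop (𝓝 0) := by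
    simpa using (tendsto_pow_atTop_nhds_zero_of_lt_one (norm_nonneg q) hq).const_mul ‖c * z‖
  obtain ⟨J, hJ⟩ := (Filter.eventually_atTop).mp (h2.eventually_le_const (by norm_num : (0:ℝ) < 1/2))
  rw [← summable_nat_add_iff J]
  apply Summable.of_norm_bounded (g := fun j => 3/2 * (‖c * z‖ * ‖q‖ ^ (j + J)))
  · apply Summable.mul_left
    apply Summable.mul_left
    have : Summable (fun j : ℕ => ‖q‖ ^ j) := summable_geometric_of_lt_one (norm_nonneg q) hq
    exact ((summable_nat_add_iff J).mpr this).congr (fun j => by rw [pow_add] )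
  · intro j
    have hb : ‖-(c * (q ^ (j+J) * z))‖ ≤ 1/2 := by
      rw [norm_neg]
      calc ‖c * (q ^ (j+J) * z)‖ = ‖c * z‖ * ‖q‖ ^ (j+J) := by
            simp only [norm_mul, norm_pow]; ring
        _ ≤ 1/2 := hJ (j+J) (by omega)
    have h3 := Complex.norm_log_one_add_half_le_self hb
    have h4 : (1 : ℂ) + -(c * (q ^ (j+J) * z)) = 1 - c * (q ^ (j+J) * z) := by ring
    rw [h4] at h3
    calc ‖Complex.log (1 - c * (q ^ (j+J) * z))‖ ≤ 3/2 * ‖-(c * (q ^ (j+J) * z))‖ := h3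
      _ ≤ 3/2 * (‖c * z‖ * ‖q‖ ^ (j + J)) := by
          rw [norm_neg]
          apply mul_le_mul_of_nonneg_left _ (by norm_num)
          simp only [norm_mul, norm_pow]
          exact le_of_eq (by ring)

lemma multipliable_aux {q : ℂ} (hq : ‖q‖ < 1) (c z : ℂ) :
    Multipliable (fun j : ℕ => 1 - c * (q ^ j * z)) := by
  by_cases h : ∀ j : ℕ, 1 - c * (q ^ j * z) ≠ 0
  · exact Complex.multipliable_of_summable_log (summable_log hq c z)
  · push_neg at h
    obtain ⟨j0, hj0⟩ := h
    refine ⟨0, ?_⟩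
    have hev : ∀ᶠ s : Finset ℕ in atTop, ∏ i ∈ s, (1 - c * (q ^ i * z)) = 0 := by
      filter_upwards [Filter.eventually_ge_atTop ({j0} : Finset ℕ)] with s hs
      exact Finset.prod_eq_zero (hs (Finset.mem_singleton_self j0)) hj0
    exact Tendsto.congr' (by filter_upwards [hev] with s hs; exact hs.symm) tendsto_const_nhds

lemma tprod_ne_zero {q : ℂ} (hq : ‖q‖ < 1) (c z : ℂ)
    (h : ∀ j : ℕ, 1 - c * (q ^ j * z) ≠ 0) :
    (∏' j : ℕ, (1 - c * (q ^ j * z))) ≠ 0 := by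
  have : cexp (∑' j : ℕ, Complex.log (1 - c * (q ^ j * z))) = ∏' j : ℕ, (1 - c * (q ^ j * z)) :=
    Complex.cexp_tsum_eq_tprod h (summable_log hq c z)
  rw [← this]
  exact Complex.exp_ne_zero _

lemma iterate_fe {Q : ℂ} (hQ : ‖Q‖ < 1) (c z L : ℂ) (f : ℂ → ℂ)
    (hfe : ∀ w, f w = (1 - c * w) * f (Q * w))
    (hlim : Tendsto (fun N => f (Q ^ N * z)) atTop (𝓝 L)) :
    f z = (∏' j : ℕ, (1 - c * (Q ^ j * z))) * L := by
  have hm := multipliable_aux hQ c z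
  have key : ∀ N, f z = (∏ i ∈ Finset.range N, (1 - c * (Q ^ i * z))) * f (Q ^ N * z) := by
    intro N
    induction N with
    | zero => simp
    | succ n ih =>
      rw [Finset.prod_range_succ, ih, hfe (Q ^ n * z)]
      have : Q * (Q ^ n * z) = Q ^ (n+1) * z := by ring
      rw [this]
      ring
  have h1 : Tendsto (fun N => (∏ i ∈ Finset.range N, (1 - c * (Q ^ i * z))) * f (Q ^ N * z))
      atTop (𝓝 ((∏' j : ℕ, (1 - c * (Q ^ j * z))) * L)) :=
    (hm.hasProd.tendsto_prod_nat).mul hlim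
  have h2 : Tendsto (fun _ : ℕ => f z) atTop (𝓝 ((∏' j : ℕ, (1 - c * (Q ^ j * z))) * L)) :=
    h1.congr (fun N => (key N).symm)
  exact (tendsto_nhds_unique h2 tendsto_const_nhds).symm

noncomputable def E2 (q z : ℂ) : ℂ := ∑' n : ℕ, z ^ n * q ^ (n*(n-1)/2) / qPoch q q n

lemma E2_term_eq {q : ℂ} (hq : ‖q‖ < 1) (z : ℂ) (m : ℕ) :
    z ^ (m+1) * q ^ ((m+1)*m/2) / qPoch q q (m+1)
      = (q*z) ^ (m+1) * q ^ ((m+1)*m/2) / qPoch q q (m+1) + z * ((q*z) ^ m * q ^ (m*(m-1)/2) / qPoch q q m) := by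
  have hP : qPoch q q (m+1) = qPoch q q m * (1 - q * q ^ m) := qPoch_succ q q m
  have hPm : qPoch q q m ≠ 0 := qq_ne_zero hq m
  have hPm1 : (1 : ℂ) - q * q ^ m ≠ 0 := by
    have : ‖q * q ^ m‖ < 1 := by
      rw [norm_mul, norm_pow]
      calc ‖q‖ * ‖q‖^m ≤ ‖q‖ * 1 := by
            apply mul_le_mul_of_nonneg_left _ (norm_nonneg q)
            exact pow_le_one₀ (norm_nonneg q) hq.le
        _ < 1 := by simpa using hq
    exact ne_zero_of_norm_lt this
  have hexp : (m+1)*m/2 = m*(m-1)/2 + m := tri_succ m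
  rw [hP, hexp, pow_add]
  field_simp
  ring

lemma E2_fe {q : ℂ} (hq : ‖q‖ < 1) (z : ℂ) : E2 q z = (1 + z) * E2 q (q * z) := by
  classical
  set s : ℂ → ℕ → ℂ := fun w n => w ^ n * q ^ (n*(n-1)/2) / qPoch q q n with hs
  have hsum : ∀ w, Summable (s w) := fun w => summable_S3 hq w
  set t : ℕ → ℂ := fun n => if n = 0 then 0 else z * s (q*z) (n-1) with ht
  have htshift : (fun n => t (n+1)) = fun n => z * s (q*z) n := by
    funext n; simp [ht]
  have htsum : Summable t := by
    rw [← summable_nat_add_iff 1, htshift]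
    exact (hsum (q*z)).mul_left z
  have hterm : ∀ n, s z n = s (q*z) n + t n := by
    intro n
    match n with
    | 0 => simp [hs, ht, qPoch_zero]
    | (m+1) =>
      simp only [ht, Nat.succ_ne_zero, if_false, Nat.add_sub_cancel]
      exact E2_term_eq hq z m
  have h1 : E2 q z = ∑' n, (s (q*z) n + t n) := tsum_congr hterm
  rw [h1, Summable.tsum_add (hsum (q*z)) htsum]
  have h2 : ∑' n, t n = z * E2 q (q*z) := by
    rw [tsum_eq_zero_add' (by rw [htshift]; exact (hsum (q*z)).mul_left z)]
    simp only [ht, if_pos rfl, zero_add]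
    rw [htshift]
    rw [tsum_mul_left]
    rfl
  rw [h2]
  have : E2 q (q*z) = ∑' n, s (q*z) n := rfl
  rw [← this]; ring

lemma E2_lim {q : ℂ} (hq : ‖q‖ < 1) (z : ℂ) :
    Tendsto (fun N : ℕ => E2 q (q ^ N * z)) atTop (𝓝 1) := by
  have hDC := tendsto_tsum_of_dominated_convergence (𝓕 := atTop)
    (f := fun (N : ℕ) (n : ℕ) => (q ^ N * z) ^ n * q ^ (n*(n-1)/2) / qPoch q q n)
    (g := fun n => if n = 0 then (1:ℂ) else 0)
    (bound := fun n => ‖z‖ ^ n * ‖q‖ ^ (n*(n-1)/2) / ∏ i ∈ Finset.range n, (1 - ‖q‖^(i+1)))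
    (summable_master (norm_nonneg q) hq (norm_nonneg z) (fun n => n*(n-1)/2)
      (fun n => by
        show n*(n-1)/2 + n ≤ (n+1)*n/2
        have := tri_succ n
        omega))
    ?_ ?_
  · have hg : (∑' n : ℕ, if n = 0 then (1:ℂ) else 0) = 1 := by
      rw [tsum_eq_single 0 (fun b hb => if_neg hb)]
      simp
    rw [hg] at hDC
    exact hDC
  · intro n
    match n with
    | 0 =>
      simp only [if_pos rfl]
      have h0 : ∀ N : ℕ, (q ^ N * z) ^ 0 * q ^ (0*(0-1)/2) / qPoch q q 0 = 1 := by
        intro N; simp [qPoch_zero]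
      exact Tendsto.congr (fun N => (h0 N).symm) tendsto_const_nhds
    | (m+1) =>
      simp only [if_neg (Nat.succ_ne_zero m)]
      have hrw : ∀ N : ℕ, (q ^ N * z) ^ (m+1) * q ^ ((m+1)*m/2) / qPoch q q (m+1)
          = (q ^ (m+1)) ^ N * (z ^ (m+1) * q ^ ((m+1)*m/2) / qPoch q q (m+1)) := by
        intro N
        rw [mul_pow, ← pow_mul, ← pow_mul]
        ring_nf
      have hlt : ‖q ^ (m+1)‖ < 1 := by
        rw [norm_pow]
        exact pow_lt_one₀ (norm_nonneg q) hq (Nat.succ_ne_zero m)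
      have := (tendsto_pow_atTop_nhds_zero_of_norm_lt_one hlt).mul_const
        (z ^ (m+1) * q ^ ((m+1)*m/2) / qPoch q q (m+1))
      rw [zero_mul] at this
      exact Tendsto.congr (fun N => (hrw N).symm) this
  · apply Filter.Eventually.of_forall
    intro N n
    have h1 : ‖(q ^ N * z) ^ n * q ^ (n*(n-1)/2) / qPoch q q n‖
        = ‖q ^ N * z‖^n * ‖q‖^(n*(n-1)/2) / ‖qPoch q q n‖ := by
      simp [norm_div, norm_mul, norm_pow]
    rw [h1]
    apply div_le_div₀ (by positivity) _ (D_pos hq n) (D_le_norm_qPoch hq n)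
    apply mul_le_mul_of_nonneg_right _ (by positivity)
    apply pow_le_pow_left₀ (norm_nonneg _)
    calc ‖q ^ N * z‖ = ‖q‖^N * ‖z‖ := by rw [norm_mul, norm_pow]
      _ ≤ 1 * ‖z‖ := by
          apply mul_le_mul_of_nonneg_right _ (norm_nonneg z)
          exact pow_le_one₀ (norm_nonneg q) hq.le
      _ = ‖z‖ := one_mul _

lemma E2_eq {q : ℂ} (hq : ‖q‖ < 1) (z : ℂ) :
    E2 q z = ∏' j : ℕ, (1 + q ^ j * z) := by
  have h := iterate_fe hq (-1) z 1 (E2 q)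
    (fun w => by rw [E2_fe hq w]; ring_nf)
    (E2_lim hq z)
  rw [h, mul_one]
  apply tprod_congr
  intro j
  ring

noncomputable def FF (q x : ℂ) : ℂ := ∑' n : ℕ, qPoch x q n * q ^ ((n+1)*n/2) / qPoch q q n

lemma tri_succ' (m : ℕ) : (m+2)*(m+1)/2 = (m+1)*m/2 + (m+1) := by
  have := tri_succ (m+1)
  simp only [Nat.add_sub_cancel] at this
  have h4 : m+1+1 = m+2 := by omega
  rw [h4] at this
  exact this

lemma one_sub_qpow_ne {q : ℂ} (hq : ‖q‖ < 1) (m : ℕ) : (1:ℂ) - q * q ^ m ≠ 0 := by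
  apply ne_zero_of_norm_lt
  rw [norm_mul, norm_pow]
  calc ‖q‖ * ‖q‖^m ≤ ‖q‖ * 1 := by
        apply mul_le_mul_of_nonneg_left _ (norm_nonneg q)
        exact pow_le_one₀ (norm_nonneg q) hq.le
    _ < 1 := by simpa using hq

lemma F_term_eq {q : ℂ} (hq : ‖q‖ < 1) (w : ℂ) (m : ℕ) :
    qPoch w q (m+1) * q ^ ((m+2)*(m+1)/2) / qPoch q q (m+1)
      - (1 - q*w) * (qPoch (q^2*w) q (m+1) * q ^ ((m+2)*(m+1)/2) / qPoch q q (m+1))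
    = w*q * (q^(m+1) * (qPoch (w*q) q (m+1) * q ^ ((m+2)*(m+1)/2)) / qPoch q q (m+1))
      - w*q * (q^m * (qPoch (w*q) q m * q ^ ((m+1)*m/2)) / qPoch q q m) := by
  have hA3 : qPoch (q^2*w) q (m+1) = qPoch (w*q*q) q (m+1) := by
    rw [show q^2*w = w*q*q by ring]
  have hA4 : (1 - w*q) * qPoch (w*q*q) q (m+1) = qPoch (w*q) q (m+2) :=
    (qPoch_shift (w*q) q (m+1)).symm
  have key2 : (1 - q*w) * (qPoch (q^2*w) q (m+1) * q ^ ((m+2)*(m+1)/2) / qPoch q q (m+1))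
      = qPoch (w*q) q (m+2) * q ^ ((m+2)*(m+1)/2) / qPoch q q (m+1) := by
    rw [hA3, ← hA4]; ring
  rw [key2]
  have hA5 : qPoch (w*q) q (m+2) = qPoch (w*q) q m * (1 - w*q*q^m) * (1 - w*q*(q^m*q)) := by
    rw [qPoch_succ, qPoch_succ, pow_succ]
  have hA1 : qPoch w q (m+1) = (1 - w) * qPoch (w*q) q m := qPoch_shift w q m
  have hA2 : qPoch (w*q) q (m+1) = qPoch (w*q) q m * (1 - w*q*q^m) := qPoch_succ _ _ _
  have hP : qPoch q q (m+1) = qPoch q q m * (1 - q*q^m) := qPoch_succ _ _ _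
  have hqT : q ^ ((m+2)*(m+1)/2) = q ^ ((m+1)*m/2) * (q^m * q) := by
    rw [tri_succ', pow_add, pow_succ]
  have hq1 : q ^ (m+1) = q^m * q := pow_succ q m
  have hPm : qPoch q q m ≠ 0 := qq_ne_zero hq m
  have h1mq : (1:ℂ) - q * q ^ m ≠ 0 := one_sub_qpow_ne hq m
  rw [hA5, hA1, hA2, hP, hqT, hq1]
  field_simp
  ring

lemma F_fe {q : ℂ} (hq : ‖q‖ < 1) (w : ℂ) : FF q w = (1 - q*w) * FF q (q^2 * w) := by
  classical
  have hsum1 : Summable (fun n => qPoch w q n * q ^ ((n+1)*n/2) / qPoch q q n) :=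
    summable_S1 hq w
  have hsum2 : Summable (fun n => qPoch (q^2*w) q n * q ^ ((n+1)*n/2) / qPoch q q n) :=
    summable_S1 hq (q^2*w)
  set v : ℕ → ℂ := fun n => w*q * (q^n * (qPoch (w*q) q n * q ^ ((n+1)*n/2)) / qPoch q q n)
    with hv
  have hsumv : Summable v := (summable_S2 hq (w*q)).mul_left (w*q)
  set u : ℕ → ℂ := fun n => if n = 0 then 0 else v (n-1) with hu
  have hushift : (fun n => u (n+1)) = v := by
    funext n; simp [hu]
  have hsumu : Summable u := by
    rw [← summable_nat_add_iff 1, hushift]; exact hsumv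
  have hterm : ∀ n, qPoch w q n * q ^ ((n+1)*n/2) / qPoch q q n
      - (1 - q*w) * (qPoch (q^2*w) q n * q ^ ((n+1)*n/2) / qPoch q q n) = v n - u n := by
    intro n
    match n with
    | 0 => simp [hu, hv, qPoch_zero]; ring
    | (m+1) =>
      simp only [hu, hv, Nat.succ_ne_zero, if_false, Nat.add_sub_cancel]
      exact F_term_eq hq w m
  have h1 : FF q w - (1 - q*w) * FF q (q^2*w) = ∑' n, (v n - u n) := by
    rw [← tsum_congr hterm, Summable.tsum_sub hsum1 (hsum2.mul_left _)]
    unfold FF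
    rw [tsum_mul_left]
  have h2 : ∑' n, (v n - u n) = 0 := by
    rw [Summable.tsum_sub hsumv hsumu]
    have : ∑' n, u n = ∑' n, v n := by
      rw [tsum_eq_zero_add' (by rw [hushift]; exact hsumv)]
      simp only [hu, if_pos rfl, zero_add]
      rw [hushift]
    rw [this, sub_self]
  exact sub_eq_zero.mp (h1.trans h2)

lemma F_lim {q : ℂ} (hq : ‖q‖ < 1) (z : ℂ) :
    Tendsto (fun N : ℕ => FF q ((q^2)^N * z)) atTop (𝓝 (E2 q q)) := by
  have hQ : ‖q^2‖ < 1 := by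
    rw [norm_pow]
    exact pow_lt_one₀ (norm_nonneg q) hq two_ne_zero
  have hDC := tendsto_tsum_of_dominated_convergence (𝓕 := atTop)
    (f := fun (N : ℕ) (n : ℕ) => qPoch ((q^2)^N * z) q n * q ^ ((n+1)*n/2) / qPoch q q n)
    (g := fun n => q ^ ((n+1)*n/2) / qPoch q q n)
    (bound := fun n => (1+‖z‖) ^ n * ‖q‖ ^ ((n+1)*n/2) / ∏ i ∈ Finset.range n, (1 - ‖q‖^(i+1)))
    (summable_master (norm_nonneg q) hq (c := 1+‖z‖) (by positivity) (fun n => (n+1)*n/2)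
      (fun n => by
        show (n+1)*n/2 + n ≤ (n+2)*(n+1)/2
        have := tri_succ' n
        omega))
    ?_ ?_
  · have hg : (∑' n : ℕ, q ^ ((n+1)*n/2) / qPoch q q n) = E2 q q := by
      apply tsum_congr
      intro n
      have hexp : q ^ ((n+1)*n/2) = q ^ n * q ^ (n*(n-1)/2) := by
        rw [tri_succ n, pow_add]; ring
      rw [hexp]
    rw [hg] at hDC
    exact hDC
  · intro n
    have hx : Tendsto (fun N : ℕ => (q^2)^N * z) atTop (𝓝 0) := by
      have := (tendsto_pow_atTop_nhds_zero_of_norm_lt_one hQ).mul_const z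
      rwa [zero_mul] at this
    have hcont : Continuous (fun x : ℂ => qPoch x q n) := by
      unfold qPoch
      apply continuous_finset_prod
      intro i _
      continuity
    have h1 : Tendsto (fun N : ℕ => qPoch ((q^2)^N * z) q n) atTop (𝓝 (qPoch 0 q n)) :=
      (hcont.tendsto 0).comp hx
    rw [qPoch_zero_left] at h1
    have h2 := (h1.mul_const (q ^ ((n+1)*n/2))).div_const (qPoch q q n)
    rw [one_mul] at h2
    exact h2
  · apply Filter.Eventually.of_forall
    intro N n
    calc ‖qPoch ((q^2)^N * z) q n * q ^ ((n+1)*n/2) / qPoch q q n‖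
        ≤ (1+‖(q^2)^N * z‖)^n * ‖q‖^((n+1)*n/2) / ∏ i ∈ Finset.range n, (1 - ‖q‖^(i+1)) :=
          norm_term_le hq _ _ n
      _ ≤ (1+‖z‖)^n * ‖q‖^((n+1)*n/2) / ∏ i ∈ Finset.range n, (1 - ‖q‖^(i+1)) := by
          apply div_le_div₀ (by positivity) _ (D_pos hq n) le_rfl
          apply mul_le_mul_of_nonneg_right _ (by positivity)
          apply pow_le_pow_left₀ (by positivity)
          have hle : ‖(q^2)^N * z‖ ≤ ‖z‖ := by
            rw [norm_mul, norm_pow]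
            calc ‖q^2‖^N * ‖z‖ ≤ 1 * ‖z‖ := by
                  apply mul_le_mul_of_nonneg_right _ (norm_nonneg z)
                  exact pow_le_one₀ (norm_nonneg _) hQ.le
              _ = ‖z‖ := one_mul _
          linarith

end Aux

open Aux

theorem phi11_eval_at_neg_q (q a : ℂ) (h0 : 0 < ‖q‖) (h1 : ‖q‖ < 1) :
    phi11 a 0 q (-q) = qPochInf (a * q) (q ^ 2) / qPochInf q (q ^ 2) := by
  have hq1 : ‖q‖ < 1 := h1
  have hQ : ‖q^2‖ < 1 := by
    rw [norm_pow]; exact pow_lt_one₀ (norm_nonneg q) hq1 two_ne_zero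
  -- Step 1 : phi11 = FF q a
  have hphi : phi11 a 0 q (-q) = FF q a := by
    unfold phi11 FF
    apply tsum_congr
    intro j
    rw [qPoch_zero_left, mul_one]
    have hsign : ((-1:ℂ))^j * (-q)^j = q^j := by
      rw [← mul_pow, neg_mul_neg, one_mul]
    have hexp : q ^ (j*(j-1)/2) * q^j = q ^ ((j+1)*j/2) := by
      rw [← pow_add, tri_succ]
    calc qPoch a q j / qPoch q q j * (-1)^j * q ^ (j*(j-1)/2) * (-q)^j
        = qPoch a q j * (q ^ (j*(j-1)/2) * ((-1)^j * (-q)^j)) / qPoch q q j := by ring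
      _ = qPoch a q j * (q ^ (j*(j-1)/2) * q^j) / qPoch q q j := by rw [hsign]
      _ = qPoch a q j * q ^ ((j+1)*j/2) / qPoch q q j := by rw [hexp]
  -- Step 2 : FF q a = P1 * E2 q q
  have h2 := iterate_fe hQ q a (E2 q q) (FF q) (fun w => F_fe hq1 w) (F_lim hq1 a)
  -- Step 3 : E2 q q = A
  have hE : E2 q q = ∏' j : ℕ, (1 + q ^ j * q) := E2_eq hq1 q
  -- Step 4 : products
  set A := ∏' j : ℕ, ((1:ℂ) + q ^ j * q) with hA
  set C := ∏' k : ℕ, ((1:ℂ) - q^2 * (q^2) ^ k) with hC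
  -- Multipliable instances
  have MA : Multipliable (fun j : ℕ => (1:ℂ) + q ^ j * q) :=
    (multipliable_aux hq1 (-1) q).congr (fun j => by ring)
  have Mf : Multipliable (fun k : ℕ => (1:ℂ) - q * q ^ k) :=
    (multipliable_aux hq1 1 q).congr (fun k => by ring)
  have MB : Multipliable (fun k : ℕ => (1:ℂ) - q * (q^2) ^ k) :=
    (multipliable_aux hQ q 1).congr (fun k => by ring)
  have MC : Multipliable (fun k : ℕ => (1:ℂ) - q^2 * (q^2) ^ k) :=
    (multipliable_aux hQ (q^2) 1).congr (fun k => by ring)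
  have hpow2 : ∀ k : ℕ, (q^2) ^ k = (q^k)^2 := fun k => by
    rw [← pow_mul, ← pow_mul, mul_comm]
  -- A * (q;q)_inf = C
  have hAf : A * (∏' k : ℕ, ((1:ℂ) - q * q ^ k)) = C := by
    rw [hA, hC, ← Multipliable.tprod_mul MA Mf]
    apply tprod_congr
    intro k
    rw [hpow2 k]; ring
  -- parity split : (q;q)_inf = B * C
  have he : Multipliable (fun k : ℕ => (1:ℂ) - q * q ^ (2*k)) :=
    MB.congr (fun k => by rw [pow_mul])
  have ho : Multipliable (fun k : ℕ => (1:ℂ) - q * q ^ (2*k+1)) :=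
    MC.congr (fun k => by rw [pow_add, pow_mul, pow_one]; ring_nf)
  have hsplit := tprod_even_mul_odd (f := fun k : ℕ => (1:ℂ) - q * q ^ k) he ho
  have heB : (∏' k : ℕ, ((1:ℂ) - q * q ^ (2*k))) = qPochInf q (q^2) := by
    unfold qPochInf
    apply tprod_congr
    intro k
    rw [pow_mul]
  have hoC : (∏' k : ℕ, ((1:ℂ) - q * q ^ (2*k+1))) = C := by
    rw [hC]
    apply tprod_congr
    intro k
    rw [pow_add, pow_mul, pow_one]; ring
  rw [heB, hoC] at hsplit
  have hsplit' : qPochInf q (q^2) * C = ∏' k : ℕ, ((1:ℂ) - q * q ^ k) := by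
    simpa using hsplit
  -- C ≠ 0
  have hCne : C ≠ 0 := by
    have hQr : ‖q‖^2 < 1 := by rw [← norm_pow]; exact hQ
    have h := tprod_ne_zero hQ (q^2) 1 (fun j => by
      apply ne_zero_of_norm_lt
      simp only [norm_mul, norm_pow, norm_one, mul_one]
      calc ‖q‖^2 * (‖q‖^2)^j ≤ ‖q‖^2 * 1 := by
            apply mul_le_mul_of_nonneg_left _ (by positivity)
            exact pow_le_one₀ (by positivity) hQr.le
        _ < 1 := by simpa using hQr)
    rw [hC]
    intro h0
    apply h
    rw [← h0]
    apply tprod_congr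
    intro j
    ring
  -- A * B = 1
  have hAB : A * qPochInf q (q^2) = 1 := by
    have hc : A * (qPochInf q (q^2) * C) = C := by rw [hsplit', hAf]
    have hc2 : (A * qPochInf q (q^2)) * C = 1 * C := by
      rw [mul_assoc, hc, one_mul]
    exact mul_right_cancel₀ hCne hc2
  -- conclude
  have hP1 : (∏' j : ℕ, ((1:ℂ) - q * ((q^2) ^ j * a))) = qPochInf (a*q) (q^2) := by
    unfold qPochInf
    apply tprod_congr
    intro j
    ring
  have hAinv : A = (qPochInf q (q^2))⁻¹ :=
    eq_inv_of_mul_eq_one_left hAB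
  rw [hphi, h2, hE, hP1, hAinv, ← div_eq_mul_inv]
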